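/- For all $w,b\in\mathbb{R}$ with $w\neq 0$, one has $\inf_{(v,c)\in\mathbb{R}^2}\int_{T_0}^{T_1}\big(c+v(wx+b)^2-\alpha x-\beta\big)^2 dx = \frac{1}{12}\alpha^2(T_1-T_0)^3\Big(1-\frac{60 d^2}{(T_1-T_0)^2+60 d^2}\Big)$, where $d=\frac{T_0+T_1}{2}+\frac{b}{w}$; in particular this infimum tends to $0$ as $|d|\to\infty$ but is strictly positive for every fixed $(w,b)$. -/

import Mathlib

open Filter

lemma poly_int (a0 a1 a2 a3 a4 T0 T1 : ℝ) :
    (∫ x in T0..T1, (a4*x^4 + a3*x^3 + a2*x^2 + a1*x + a0)) =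
      a4*(T1^5-T0^5)/5 + a3*(T1^4-T0^4)/4 + a2*(T1^3-T0^3)/3
        + a1*(T1^2-T0^2)/2 + a0*(T1-T0) := by
  have h : ∀ x ∈ Set.uIcc T0 T1,
      HasDerivAt (fun x : ℝ => a4/5*x^5 + a3/4*x^4 + a2/3*x^3 + a1/2*x^2 + a0*x^1)
        (a4*x^4 + a3*x^3 + a2*x^2 + a1*x + a0) x := by
    intro x _
    have H := (((((hasDerivAt_pow 5 x).const_mul (a4/5)).add
      ((hasDerivAt_pow 4 x).const_mul (a3/4))).add
      ((hasDerivAt_pow 3 x).const_mul (a2/3))).add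
      ((hasDerivAt_pow 2 x).const_mul (a1/2))).add
      ((hasDerivAt_pow 1 x).const_mul a0)
    refine H.congr_deriv ?_
    push_cast
    ring
  have hcont : IntervalIntegrable (fun x : ℝ => a4*x^4 + a3*x^3 + a2*x^2 + a1*x + a0)
      MeasureTheory.volume T0 T1 := by
    apply Continuous.intervalIntegrable
    continuity
  rw [intervalIntegral.integral_eq_sub_of_hasDerivAt h hcont]
  ring

set_option maxHeartbeats 1000000 in
theorem quad_single_neuron_inf (α β T0 T1 w b : ℝ) (hα : α ≠ 0) (hT : T0 < T1)
    (hw : w ≠ 0) :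
    sInf {y : ℝ | ∃ v c : ℝ,
        y = ∫ x in T0..T1, (c + v * (w * x + b) ^ 2 - α * x - β) ^ 2} =
      1 / 12 * α ^ 2 * (T1 - T0) ^ 3 *
        (1 - 60 * ((T0 + T1) / 2 + b / w) ^ 2 /
          ((T1 - T0) ^ 2 + 60 * ((T0 + T1) / 2 + b / w) ^ 2)) ∧
    0 < 1 / 12 * α ^ 2 * (T1 - T0) ^ 3 *
        (1 - 60 * ((T0 + T1) / 2 + b / w) ^ 2 /
          ((T1 - T0) ^ 2 + 60 * ((T0 + T1) / 2 + b / w) ^ 2)) ∧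
    Tendsto (fun d : ℝ => 1 / 12 * α ^ 2 * (T1 - T0) ^ 3 *
        (1 - 60 * d ^ 2 / ((T1 - T0) ^ 2 + 60 * d ^ 2)))
      (cocompact ℝ) (nhds 0) := by
  have hL : 0 < T1 - T0 := sub_pos.2 hT
  set e : ℝ := w * ((T0 + T1) / 2) + b with he
  set D : ℝ := w ^ 2 * (T1 - T0) ^ 2 + 60 * e ^ 2 with hD
  have hDpos : 0 < D := by
    rw [hD]
    positivity
  have hα2 : 0 < α ^ 2 := by positivity
  clear_value e D
  -- The stated infimum value in cleared form
  have hMform :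
      1 / 12 * α ^ 2 * (T1 - T0) ^ 3 *
        (1 - 60 * ((T0 + T1) / 2 + b / w) ^ 2 /
          ((T1 - T0) ^ 2 + 60 * ((T0 + T1) / 2 + b / w) ^ 2)) =
      α ^ 2 * (T1 - T0) ^ 5 * w ^ 2 / (12 * D) := by
    have h1 : (T1 - T0) ^ 2 + 60 * ((T0 + T1) / 2 + b / w) ^ 2 ≠ 0 := by positivity
    rw [hD, he]
    field_simp
    ring
  -- Closed form of the integral
  have hF : ∀ v c : ℝ,
      (∫ x in T0..T1, (c + v * (w * x + b) ^ 2 - α * x - β) ^ 2) =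
        v ^ 2 * w ^ 4 * (T1 - T0) ^ 5 / 180
        + (T1 - T0) ^ 3 / 12 * (2 * v * w * e - α) ^ 2
        + (T1 - T0) * (c - α * ((T0 + T1) / 2) - β + v * e ^ 2
            + v * w ^ 2 * (T1 - T0) ^ 2 / 12) ^ 2 := by
    intro v c
    have hint : Set.EqOn (fun x : ℝ => (c + v * (w * x + b) ^ 2 - α * x - β) ^ 2)
        (fun x : ℝ => (v*w^2)^2*x^4 + (2*(v*w^2)*(2*v*w*b-α))*x^3
          + ((2*v*w*b-α)^2+2*(v*w^2)*(c+v*b^2-β))*x^2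
          + (2*(2*v*w*b-α)*(c+v*b^2-β))*x + (c+v*b^2-β)^2) (Set.uIcc T0 T1) := by
      intro x _
      ring
    rw [intervalIntegral.integral_congr hint, poly_int, he]
    ring
  -- minimizer
  set vs : ℝ := 30 * α * e / (w * D) with hvs
  set cs : ℝ := α * ((T0 + T1) / 2) + β - vs * e ^ 2 - vs * w ^ 2 * (T1 - T0) ^ 2 / 12
    with hcs
  clear_value vs cs
  have hwD : w * D ≠ 0 := mul_ne_zero hw (ne_of_gt hDpos)
  have hQs : (∫ x in T0..T1, (cs + vs * (w * x + b) ^ 2 - α * x - β) ^ 2)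
      = α ^ 2 * (T1 - T0) ^ 5 * w ^ 2 / (12 * D) := by
    have hDne : D ≠ 0 := hDpos.ne'
    rw [hF vs cs, hcs, hvs]
    field_simp
    rw [hD]
    ring
  -- lower bound
  have hlow : ∀ v c : ℝ,
      α ^ 2 * (T1 - T0) ^ 5 * w ^ 2 / (12 * D) ≤
        ∫ x in T0..T1, (c + v * (w * x + b) ^ 2 - α * x - β) ^ 2 := by
    intro v c
    rw [hF v c, div_le_iff₀ (by positivity)]
    have key : 180 * D * (v ^ 2 * w ^ 4 * (T1 - T0) ^ 5 / 180
        + (T1 - T0) ^ 3 / 12 * (2 * v * w * e - α) ^ 2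
        + (T1 - T0) * (c - α * ((T0 + T1) / 2) - β + v * e ^ 2
            + v * w ^ 2 * (T1 - T0) ^ 2 / 12) ^ 2)
        - 15 * α ^ 2 * (T1 - T0) ^ 5 * w ^ 2
        = (T1 - T0) ^ 3 * (v * w * D - 30 * α * e) ^ 2
          + 180 * D * (T1 - T0) * (c - α * ((T0 + T1) / 2) - β + v * e ^ 2
            + v * w ^ 2 * (T1 - T0) ^ 2 / 12) ^ 2 := by
      rw [hD]
      ring
    have n1 : 0 ≤ (T1 - T0) ^ 3 * (v * w * D - 30 * α * e) ^ 2 := by positivity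
    have n2 : 0 ≤ 180 * D * (T1 - T0) * (c - α * ((T0 + T1) / 2) - β + v * e ^ 2
        + v * w ^ 2 * (T1 - T0) ^ 2 / 12) ^ 2 := by positivity
    linarith [key, n1, n2]
  -- the set and its infimum
  refine ⟨?_, ?_, ?_⟩
  · rw [hMform]
    have hmem : α ^ 2 * (T1 - T0) ^ 5 * w ^ 2 / (12 * D) ∈
        {y : ℝ | ∃ v c : ℝ,
          y = ∫ x in T0..T1, (c + v * (w * x + b) ^ 2 - α * x - β) ^ 2} :=
      ⟨vs, cs, hQs.symm⟩
    have hlb : ∀ y ∈ {y : ℝ | ∃ v c : ℝ,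
        y = ∫ x in T0..T1, (c + v * (w * x + b) ^ 2 - α * x - β) ^ 2},
        α ^ 2 * (T1 - T0) ^ 5 * w ^ 2 / (12 * D) ≤ y := by
      rintro y ⟨v, c, rfl⟩
      exact hlow v c
    exact le_antisymm (csInf_le ⟨_, hlb⟩ hmem) (le_csInf ⟨_, hmem⟩ hlb)
  · rw [hMform]
    positivity
  · have heq : (fun d : ℝ => 1 / 12 * α ^ 2 * (T1 - T0) ^ 3 *
        (1 - 60 * d ^ 2 / ((T1 - T0) ^ 2 + 60 * d ^ 2)))
        = fun d : ℝ => (1 / 12 * α ^ 2 * (T1 - T0) ^ 3 * (T1 - T0) ^ 2) *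
            ((T1 - T0) ^ 2 + 60 * d ^ 2)⁻¹ := by
      funext d
      have hpos : (0:ℝ) < (T1 - T0) ^ 2 + 60 * d ^ 2 := by positivity
      field_simp
      try ring
    rw [heq]
    have h3 : Tendsto (fun d : ℝ => d ^ 2) (cocompact ℝ) atTop := by
      have h := (tendsto_pow_atTop (n := 2) two_ne_zero).comp
        (tendsto_norm_cocompact_atTop (E := ℝ))
      refine h.congr fun d => ?_
      simp [Real.norm_eq_abs, sq_abs]
    have h2 : Tendsto (fun d : ℝ => (T1 - T0) ^ 2 + 60 * d ^ 2) (cocompact ℝ) atTop :=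
      tendsto_atTop_add_const_left _ _ (h3.const_mul_atTop (by norm_num))
    simpa using h2.inv_tendsto_atTop.const_mul
      (1 / 12 * α ^ 2 * (T1 - T0) ^ 3 * (T1 - T0) ^ 2)
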